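/- arXiv:1402.2753 — 7 statements merged into one kernel-verified Lean document; each statement's English description precedes it below -/
import Mathlib

section
/- Let X be a finite abelian group (written additively) and let n ≥ 1 be an integer. For each m = (m₁,…,mₙ) ∈ ℤⁿ let φ_m : Xⁿ → X be the group homomorphism sending (x₁,…,xₙ) to Σ_{i=1}^{n} mᵢ • xᵢ. Then for all x, y ∈ Xⁿ, the element y belongs to the subgroup of Xⁿ generated by x if and only if, for every m ∈ ℤⁿ, the element φ_m(y) belongs to the subgroup of X generated by φ_m(x). -/
open AddSubgroup DirectSum

theorem lemB_ds (ι : Type) [Fintype ι] (q : ι → ℕ) (hq : ∀ i, 1 < q i)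
    (f : (⨁ i, ZMod (q i)) →+ (⨁ i, ZMod (q i)))
    (hf : ∀ z, f z ∈ zmultiples z) :
    ∃ r : ℤ, ∀ z, f z = r • z := by
  classical
  have hne : ∀ i, NeZero (q i) := fun i => ⟨by have := hq i; omega⟩
  set g : ∀ _ : ι, ⨁ j, ZMod (q j) := fun i => DirectSum.of (fun j => ZMod (q j)) i 1 with hg
  obtain ⟨r, hr⟩ := mem_zmultiples_iff.mp (hf (∑ i, g i))
  have hchoice : ∀ i : ι, ∃ c : ℤ, c • g i = f (g i) := fun i =>
    mem_zmultiples_iff.mp (hf (g i))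
  choose ri hri using hchoice
  have h2 : ∀ (c : ℤ) (i : ι),
      c • g i = DirectSum.of (fun j => ZMod (q j)) i (c • 1) :=
    fun c i => (map_zsmul (DirectSum.of (fun j => ZMod (q j)) i) c 1).symm
  refine ⟨r, fun z => ?_⟩
  have hsum : ∑ i, ri i • g i = ∑ i, r • g i := by
    calc ∑ i, ri i • g i = ∑ i, f (g i) := Finset.sum_congr rfl fun i _ => hri i
      _ = f (∑ i, g i) := (map_sum f g Finset.univ).symm
      _ = r • ∑ i, g i := hr.symm
      _ = ∑ i, r • g i := Finset.smul_sum
  have key : ∀ j, f (g j) = r • g j := by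
    intro j
    simp only [h2] at hsum
    have h1 := DFinsupp.ext_iff.mp hsum j
    rw [DFinsupp.finset_sum_apply, DFinsupp.finset_sum_apply] at h1
    simp only [DirectSum.of_apply] at h1
    rw [Finset.sum_dite_eq' Finset.univ j, Finset.sum_dite_eq' Finset.univ j] at h1
    simp only [Finset.mem_univ, if_true] at h1
    rw [← hri j, h2 (ri j) j, h2 r j, h1]
  calc f z = f (∑ i, DirectSum.of (fun j => ZMod (q j)) i (z i)) := by
        rw [DirectSum.sum_univ_of]
    _ = ∑ i, f (DirectSum.of (fun j => ZMod (q j)) i (z i)) := map_sum f _ Finset.univ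
    _ = ∑ i, r • DirectSum.of (fun j => ZMod (q j)) i (z i) := by
        refine Finset.sum_congr rfl fun i _ => ?_
        have hz : DirectSum.of (fun j => ZMod (q j)) i (z i) = (z i).val • g i := by
          rw [← map_nsmul]
          congr 1
          have h3 : (((z i).val : ℕ) : ZMod (q i)) = z i := ZMod.natCast_rightInverse (z i)
          rw [nsmul_eq_mul, mul_one, h3]
        rw [hz, map_nsmul, key i, smul_comm]
    _ = r • ∑ i, DirectSum.of (fun j => ZMod (q j)) i (z i) := (Finset.smul_sum).symm
    _ = r • z := by rw [DirectSum.sum_univ_of]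

theorem lemB (G : Type*) [AddCommGroup G] [Finite G] (f : G →+ G)
    (hf : ∀ z, f z ∈ AddSubgroup.zmultiples z) :
    ∃ r : ℤ, ∀ z, f z = r • z := by
  obtain ⟨ι, hι, q, hq, ⟨e⟩⟩ := AddCommGroup.equiv_directSum_zmod_of_finite' G
  let f' : (⨁ i, ZMod (q i)) →+ (⨁ i, ZMod (q i)) :=
    (e.toAddMonoidHom.comp f).comp e.symm.toAddMonoidHom
  have hf' : ∀ w, f' w ∈ AddSubgroup.zmultiples w := by
    intro w
    obtain ⟨k, hk⟩ := AddSubgroup.mem_zmultiples_iff.mp (hf (e.symm w))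
    refine AddSubgroup.mem_zmultiples_iff.mpr ⟨k, ?_⟩
    show k • w = e (f (e.symm w))
    rw [← hk, map_zsmul, AddEquiv.apply_symm_apply]
  obtain ⟨r, hr⟩ := lemB_ds ι q hq f' hf'
  refine ⟨r, fun z => ?_⟩
  have := hr (e z)
  have h2 : e (f z) = r • e z := by
    simpa [f'] using this
  have := congrArg e.symm h2
  rwa [AddEquiv.symm_apply_apply, map_zsmul, AddEquiv.symm_apply_apply] at this

/-- Let `X` be a finite abelian group and `n ≥ 1`. For `m ∈ ℤⁿ` let
`φ_m : Xⁿ → X` be `x ↦ ∑ i, m i • x i`. Then for `x y ∈ Xⁿ`, `y` lies in the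
subgroup generated by `x` iff for every `m`, `φ_m y` lies in the subgroup
generated by `φ_m x`. -/
theorem stmt0 (X : Type*) [AddCommGroup X] [Fintype X] (n : ℕ) (hn : 1 ≤ n)
    (x y : Fin n → X) :
    y ∈ AddSubgroup.zmultiples x ↔
      ∀ m : Fin n → ℤ,
        (∑ i, m i • y i) ∈ AddSubgroup.zmultiples (∑ i, m i • x i) := by
  classical
  constructor
  · rintro ⟨r, rfl⟩ m
    refine AddSubgroup.mem_zmultiples_iff.mpr ⟨r, ?_⟩
    rw [Finset.smul_sum]
    refine Finset.sum_congr rfl fun i _ => ?_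
    show r • m i • x i = m i • r • x i
    rw [smul_comm]
  · intro h
    set Φ : (Fin n → ℤ) →+ X := AddMonoidHom.mk' (fun m => ∑ i, m i • x i)
      (by intro a b; rw [← Finset.sum_add_distrib]
          exact Finset.sum_congr rfl fun i _ => by rw [Pi.add_apply, add_smul]) with hΦ
    set Ψ : (Fin n → ℤ) →+ X := AddMonoidHom.mk' (fun m => ∑ i, m i • y i)
      (by intro a b; rw [← Finset.sum_add_distrib]
          exact Finset.sum_congr rfl fun i _ => by rw [Pi.add_apply, add_smul]) with hΨ
    have hmem : ∀ m, Ψ m ∈ AddSubgroup.zmultiples (Φ m) := fun m => h m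
    have welldef : ∀ m m', Φ m = Φ m' → Ψ m = Ψ m' := by
      intro m m' hmm
      have h0 : Φ (m - m') = 0 := by rw [map_sub, hmm, sub_self]
      obtain ⟨k, hk⟩ := AddSubgroup.mem_zmultiples_iff.mp (hmem (m - m'))
      rw [h0, smul_zero] at hk
      have := hk.symm
      rw [map_sub, sub_eq_zero] at this
      exact this
    set Y : AddSubgroup X := Φ.range with hY
    have memY : ∀ m, Ψ m ∈ Y := by
      intro m
      obtain ⟨k, hk⟩ := AddSubgroup.mem_zmultiples_iff.mp (hmem m)
      exact ⟨k • m, by rw [map_zsmul, hk]⟩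
    have repex : ∀ z : Y, ∃ m, Φ m = (z : X) := fun z => z.2
    choose rep hrep using repex
    set ψ : Y →+ Y := AddMonoidHom.mk' (fun z => ⟨Ψ (rep z), memY _⟩)
      (by
        intro a b
        apply Subtype.ext
        show Ψ (rep (a + b)) = Ψ (rep a) + Ψ (rep b)
        rw [← map_add]
        apply welldef
        rw [map_add, hrep, hrep, hrep]
        rfl) with hψ
    have hψ2 : ∀ z : Y, ψ z ∈ AddSubgroup.zmultiples z := by
      intro z
      obtain ⟨k, hk⟩ := AddSubgroup.mem_zmultiples_iff.mp (hmem (rep z))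
      refine AddSubgroup.mem_zmultiples_iff.mpr ⟨k, ?_⟩
      apply Subtype.ext
      show k • (z : X) = Ψ (rep z)
      rw [← hrep z, hk]
    obtain ⟨r, hr⟩ := lemB Y ψ hψ2
    refine AddSubgroup.mem_zmultiples_iff.mpr ⟨r, ?_⟩
    funext i
    have Φdef : ∀ m, Φ m = ∑ j, m j • x j := fun m => rfl
    have Ψdef : ∀ m, Ψ m = ∑ j, m j • y j := fun m => rfl
    have hsx : Φ (Pi.single i 1) = x i := by
      rw [Φdef, Finset.sum_eq_single i]
      · rw [Pi.single_eq_same, one_smul]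
      · intro j _ hj
        rw [Pi.single_eq_of_ne hj, zero_smul]
      · intro hi; exact absurd (Finset.mem_univ i) hi
    have hsy : Ψ (Pi.single i 1) = y i := by
      rw [Ψdef, Finset.sum_eq_single i]
      · rw [Pi.single_eq_same, one_smul]
      · intro j _ hj
        rw [Pi.single_eq_of_ne hj, zero_smul]
      · intro hi; exact absurd (Finset.mem_univ i) hi
    have xiY : x i ∈ Y := ⟨Pi.single i 1, hsx⟩
    have h5 := hr ⟨x i, xiY⟩
    have h6 : Ψ (rep ⟨x i, xiY⟩) = y i := by
      rw [← hsy]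
      exact welldef _ _ (by rw [hrep, hsx])
    have h7 := congrArg (Subtype.val) h5
    have h8 : (↑(ψ ⟨x i, xiY⟩) : X) = Ψ (rep ⟨x i, xiY⟩) := rfl
    have h9 : (↑(r • (⟨x i, xiY⟩ : Y)) : X) = r • x i := rfl
    rw [h8, h9, h6] at h7
    show r • x i = y i
    exact h7.symm
end

section
/- Let p be a prime and X a finite abelian p-group, written additively. Let x₁, x ∈ X with x ≠ 0. Let a be the smallest natural number with p^a • x₁ = 0 and b the smallest natural number with p^b • x = 0, and assume a ≥ b. Let h be the smallest natural number such that p^h • x belongs to the subgroup generated by x₁. Then h ≤ b, and there exists an integer u coprime to p such that p^h • x + p^{h + a − b} • (u • x₁) = 0. -/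
/-- Let `p` be prime, `X` a finite abelian `p`-group, `x₁ x ∈ X` with `x ≠ 0`,
`a` (resp. `b`) the smallest natural number with `p ^ a • x₁ = 0`
(resp. `p ^ b • x = 0`), with `a ≥ b`, and `h` the smallest natural number such
that `p ^ h • x` lies in the subgroup generated by `x₁`. Then `h ≤ b` and there
is an integer `u` coprime to `p` with `p ^ h • x + p ^ (h + a - b) • (u • x₁) = 0`. -/
theorem stmt2 (p : ℕ) (hp : p.Prime) (X : Type*) [AddCommGroup X] [Fintype X]
    (hpgrp : ∀ g : X, ∃ k : ℕ, p ^ k • g = 0)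
    (x₁ x : X) (hx : x ≠ 0) (a b h : ℕ)
    (ha : p ^ a • x₁ = 0) (ha' : ∀ a' < a, p ^ a' • x₁ ≠ 0)
    (hb : p ^ b • x = 0) (hb' : ∀ b' < b, p ^ b' • x ≠ 0)
    (hab : b ≤ a)
    (hh : p ^ h • x ∈ AddSubgroup.zmultiples x₁)
    (hh' : ∀ h' < h, p ^ h' • x ∉ AddSubgroup.zmultiples x₁) :
    h ≤ b ∧ ∃ u : ℤ, IsCoprime u (p : ℤ) ∧
      p ^ h • x + p ^ (h + a - b) • (u • x₁) = 0 := by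
  have hpZ : Prime (p : ℤ) := Nat.prime_iff_prime_int.1 hp
  have hpne : (p : ℤ) ≠ 0 := by exact_mod_cast hp.ne_zero
  have key : ∀ (n : ℕ) (y : X), ((p : ℤ) ^ n) • y = (p ^ n) • y := fun n y => by
    rw [← Nat.cast_pow, natCast_zsmul]
  have hordx₁ : addOrderOf x₁ = p ^ a := by
    have hd : addOrderOf x₁ ∣ p ^ a := addOrderOf_dvd_of_nsmul_eq_zero ha
    obtain ⟨k, hk, hke⟩ := (Nat.dvd_prime_pow hp).mp hd
    rcases lt_or_eq_of_le hk with hlt | rfl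
    · exact absurd (hke ▸ addOrderOf_nsmul_eq_zero x₁) (ha' k hlt)
    · exact hke
  have hcast : ((addOrderOf x₁ : ℤ)) = (p : ℤ) ^ a := by rw [hordx₁]; push_cast; ring
  have hhb : h ≤ b := by
    by_contra hc
    exact hh' b (lt_of_not_ge hc) (hb ▸ (AddSubgroup.zmultiples x₁).zero_mem)
  refine ⟨hhb, ?_⟩
  rcases eq_or_lt_of_le hhb with rfl | hlt
  · refine ⟨1, isCoprime_one_left, ?_⟩
    have : h + a - h = a := by omega
    rw [this, hb, one_zsmul, ha, add_zero]
  · obtain ⟨r, hr⟩ := AddSubgroup.mem_zmultiples_iff.mp hh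
    have hb1 : 1 ≤ b := by omega
    have hdvd : (p : ℤ) ^ a ∣ (p : ℤ) ^ (b - h) * r := by
      rw [← hcast, addOrderOf_dvd_iff_zsmul_eq_zero, mul_smul, hr, ← key h x, smul_smul,
        ← pow_add]
      have e : b - h + h = b := by omega
      rw [e, key b x, hb]
    have hsplit : (p : ℤ) ^ a = (p : ℤ) ^ (b - h) * (p : ℤ) ^ (a - b + h) := by
      rw [← pow_add]; congr 1; omega
    have hdvd2 : (p : ℤ) ^ (a - b + h) ∣ r := by
      rw [hsplit] at hdvd
      exact (mul_dvd_mul_iff_left (pow_ne_zero _ hpne)).mp hdvd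
    obtain ⟨s, rfl⟩ := hdvd2
    have hps : ¬ (p : ℤ) ∣ s := by
      rintro ⟨t, rfl⟩
      apply hb' (b - 1) (by omega)
      rw [← key (b - 1) x]
      have e1 : ((p : ℤ) ^ (b - 1)) • x = ((p : ℤ) ^ (b - 1 - h)) • ((p : ℤ) ^ h • x) := by
        rw [smul_smul, ← pow_add]; congr 2; omega
      rw [e1, key h x, ← hr, smul_smul]
      have e2 : (p : ℤ) ^ (b - 1 - h) * ((p : ℤ) ^ (a - b + h) * ((p : ℤ) * t))
          = t * (p : ℤ) ^ a := by
        rw [show ((p : ℤ) ^ a) = (p : ℤ) ^ (b - 1 - h) * (p : ℤ) ^ (a - b + h) * (p : ℤ) by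
          rw [mul_assoc, ← pow_succ, ← pow_add]; congr 1; omega]
        ring
      rw [e2, mul_smul, key a x₁, ha, smul_zero]
    refine ⟨-s, ?_, ?_⟩
    · exact (hpZ.coprime_iff_not_dvd.mpr (fun hd => hps (dvd_neg.mp hd))).symm
    · rw [← key (h + a - b) (-s • x₁), ← hr, smul_smul, ← add_smul,
        show (p : ℤ) ^ (a - b + h) * s + (p : ℤ) ^ (h + a - b) * -s = 0 by
          rw [show h + a - b = a - b + h by omega]; ring,
        zero_smul]
end

section
/- Let p be a prime and X a finite abelian p-group, written additively. Let x₁, x ∈ X with x ≠ 0. Let a be the smallest natural number with p^a • x₁ = 0 and b the smallest natural number with p^b • x = 0, and assume a ≥ b. Let h be the smallest natural number such that p^h • x belongs to the subgroup generated by x₁, and let u be an integer coprime to p satisfying p^h • x + p^{h + a − b} • (u • x₁) = 0. Set z = x + p^{a − b} • (u • x₁). Then the map ℤ/p^aℤ ⊕ ℤ/p^hℤ → X, (e, f) ↦ e • x₁ + f • z, is injective; equivalently, for all integers e, f, if e • x₁ + f • z = 0 then p^a divides e and p^h divides f. -/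
lemma aux_dvd (p : ℕ) (hp : p.Prime) {X : Type*} [AddCommGroup X] (x : X)
    (S : AddSubgroup X) (n h : ℕ)
    (hpn : p ^ n • x ∈ S)
    (hmin : ∀ h' < h, p ^ h' • x ∉ S)
    (m : ℤ) (hm : m • x ∈ S) : (p : ℤ) ^ h ∣ m := by
  set d : ℕ := Int.gcd m ((p : ℤ) ^ n) with hd
  have hdvd : (d : ℤ) ∣ (p : ℤ) ^ n := Int.gcd_dvd_right _ _
  have hdn : d ∣ p ^ n := by exact_mod_cast hdvd
  obtain ⟨s, hs, hds⟩ := (Nat.dvd_prime_pow hp).mp hdn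
  have hbez : (d : ℤ) = m * Int.gcdA m ((p : ℤ) ^ n) + (p : ℤ) ^ n * Int.gcdB m ((p : ℤ) ^ n) :=
    Int.gcd_eq_gcd_ab _ _
  have hmem : p ^ s • x ∈ S := by
    have h1 : ((d : ℤ)) • x ∈ S := by
      rw [hbez, add_smul, mul_comm m, mul_smul, mul_comm ((p : ℤ) ^ n), mul_smul]
      refine S.add_mem (S.zsmul_mem hm _) (S.zsmul_mem ?_ _)
      have : ((p : ℤ) ^ n) • x = p ^ n • x := by
        rw [show ((p : ℤ) ^ n) = ((p ^ n : ℕ) : ℤ) by push_cast; ring, natCast_zsmul]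
      rwa [this]
    have : ((d : ℤ)) • x = p ^ s • x := by
      rw [hds]; push_cast; rw [show ((p : ℤ) ^ s) = ((p ^ s : ℕ) : ℤ) by push_cast; ring,
        natCast_zsmul]
    rwa [this] at h1
  have hhs : h ≤ s := not_lt.mp fun hlt => hmin s hlt hmem
  have h2 : (p : ℤ) ^ h ∣ (d : ℤ) := by
    rw [hds]; push_cast; exact pow_dvd_pow _ hhs
  exact h2.trans (Int.gcd_dvd_left _ _)



/-- With the setup of the previous statement, let `u` be an integer coprime to
`p` with `p ^ h • x + p ^ (h + a - b) • (u • x₁) = 0` and set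
`z = x + p ^ (a - b) • (u • x₁)`. Then the map
`ℤ/p^aℤ ⊕ ℤ/p^hℤ → X, (e, f) ↦ e • x₁ + f • z` is injective; equivalently,
for all integers `e f`, if `e • x₁ + f • z = 0` then `p ^ a ∣ e` and `p ^ h ∣ f`. -/
theorem stmt3 (p : ℕ) (hp : p.Prime) (X : Type*) [AddCommGroup X] [Fintype X]
    (hpgrp : ∀ g : X, ∃ k : ℕ, p ^ k • g = 0)
    (x₁ x : X) (hx : x ≠ 0) (a b h : ℕ)
    (ha : p ^ a • x₁ = 0) (ha' : ∀ a' < a, p ^ a' • x₁ ≠ 0)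
    (hb : p ^ b • x = 0) (hb' : ∀ b' < b, p ^ b' • x ≠ 0)
    (hab : b ≤ a)
    (hh : p ^ h • x ∈ AddSubgroup.zmultiples x₁)
    (hh' : ∀ h' < h, p ^ h' • x ∉ AddSubgroup.zmultiples x₁)
    (u : ℤ) (hu : IsCoprime u (p : ℤ))
    (hux : p ^ h • x + p ^ (h + a - b) • (u • x₁) = 0)
    (z : X) (hz : z = x + p ^ (a - b) • (u • x₁)) :
    ∀ e f : ℤ, e • x₁ + f • z = 0 → (p : ℤ) ^ a ∣ e ∧ (p : ℤ) ^ h ∣ f := by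
  intro e f hef
  set S := AddSubgroup.zmultiples x₁ with hS
  have hx1S : x₁ ∈ S := AddSubgroup.mem_zmultiples _
  -- f • x ∈ S
  have hfz_eq : f • z = f • x + f • (p ^ (a - b) • (u • x₁)) := by
    rw [hz, smul_add]
  have hfx : f • x ∈ S := by
    have h1 : f • x = -(e • x₁) - f • (p ^ (a - b) • (u • x₁)) := by
      have : f • z = -(e • x₁) := by
        rw [eq_comm, neg_eq_iff_add_eq_zero, add_comm]; linear_combination (norm := abel) hef
      rw [← this, hfz_eq]; abel
    rw [h1]
    refine S.sub_mem (S.neg_mem (S.zsmul_mem hx1S _)) (S.zsmul_mem (S.nsmul_mem (S.zsmul_mem hx1S _) _) _)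
  have hbS : p ^ b • x ∈ S := by rw [hb]; exact S.zero_mem
  have hf : (p : ℤ) ^ h ∣ f := aux_dvd p hp x S b h hbS hh' f hfx
  -- p ^ h • z = 0
  have hz0 : p ^ h • z = 0 := by
    rw [hz, smul_add, smul_smul, ← pow_add, show h + (a - b) = h + a - b by omega]
    exact hux
  have hfz : f • z = 0 := by
    obtain ⟨k, hk⟩ := hf
    rw [hk, mul_comm, mul_smul,
      show ((p : ℤ) ^ h) • z = p ^ h • z by
        rw [show ((p : ℤ) ^ h) = ((p ^ h : ℕ) : ℤ) by push_cast; ring, natCast_zsmul],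
      hz0, smul_zero]
  have hex : e • x₁ = 0 := by
    have := hef
    rw [hfz, add_zero] at this
    exact this
  have he : (p : ℤ) ^ a ∣ e := by
    refine aux_dvd p hp x₁ ⊥ a a ?_ (fun a' ha'' => ?_) e ?_
    · simpa [AddSubgroup.mem_bot] using ha
    · simpa [AddSubgroup.mem_bot] using ha' a' ha''
    · simpa [AddSubgroup.mem_bot] using hex
  exact ⟨he, hf⟩
end

section
/- Let p be a prime and X a finite abelian p-group, written additively. Let x₁, x ∈ X, let a be the smallest natural number with p^a • x₁ = 0 and b the smallest natural number with p^b • x = 0, and assume a ≥ b. Let r be an integer and suppose that for every integer m, the element r • x belongs to the subgroup of X generated by m • x₁ + x. Then p^b divides r; in particular r • x = 0. -/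
private lemma ord_exact {X : Type*} [AddCommGroup X] (p e : ℕ) (hp : p.Prime) (y : X)
    (h0 : p ^ e • y = 0) (h1 : p ^ (e - 1) • y ≠ 0) : addOrderOf y = p ^ e := by
  obtain ⟨j, hj, hord⟩ := (Nat.dvd_prime_pow hp).mp (addOrderOf_dvd_of_nsmul_eq_zero h0)
  rcases eq_or_lt_of_le hj with h | h
  · rw [hord, h]
  · exfalso
    apply h1
    rw [← addOrderOf_dvd_iff_nsmul_eq_zero, hord]
    exact pow_dvd_pow p (by omega)

private lemma crux {X : Type*} [AddCommGroup X] (p : ℕ) (hp : p.Prime) (b : ℕ) (hb1 : 1 ≤ b)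
    (z x : X) (hz : p ^ b • z = 0) (hz' : p ^ (b - 1) • z ≠ 0) (hx : p ^ b • x = 0)
    (w : ℤ) (hw : ¬ (p : ℤ) ∣ w)
    (hr : ∀ k : ℤ, ((p : ℤ) ^ (b - 1) * w) • x ∈ AddSubgroup.zmultiples (k • z + x)) :
    ((p : ℤ) ^ (b - 1) * w) • x = 0 := by
  by_contra hrx
  set R : ℤ := (p : ℤ) ^ (b - 1) * w with hR
  have hpz : Prime (p : ℤ) := Nat.prime_iff_prime_int.mp hp
  have hp0 : (p : ℤ) ≠ 0 := hpz.ne_zero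
  have hpow : ∀ j : ℕ, 1 ≤ j → (p : ℤ) ^ j = (p : ℤ) * (p : ℤ) ^ (j - 1) := by
    intro j hj
    rw [← pow_succ']
    congr 1
    omega
  -- pass to ℤ-smul versions
  have hxz : ((p : ℤ) ^ b) • x = 0 := by
    rw [show ((p:ℤ)^b) = ((p^b : ℕ) : ℤ) by push_cast; ring, natCast_zsmul]; exact hx
  have hzz : ((p : ℤ) ^ b) • z = 0 := by
    rw [show ((p:ℤ)^b) = ((p^b : ℕ) : ℤ) by push_cast; ring, natCast_zsmul]; exact hz
  set E : Set ℕ := {e : ℕ | ∃ k : ℤ, p ^ e • (k • z + x) = 0} with hE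
  have hbE : b ∈ E := by
    refine ⟨1, ?_⟩
    rw [one_zsmul, smul_add, hz, hx, add_zero]
  set e : ℕ := sInf E with he
  have heE : e ∈ E := Nat.sInf_mem ⟨b, hbE⟩
  have heb : e ≤ b := Nat.sInf_le hbE
  have he1 : 1 ≤ e := by
    rcases Nat.eq_zero_or_pos e with h | h
    · exfalso
      obtain ⟨k, hk⟩ := heE
      rw [h, pow_zero, one_smul] at hk
      obtain ⟨s, hs⟩ := AddSubgroup.mem_zmultiples_iff.mp (hr k)
      rw [hk, smul_zero] at hs
      exact hrx hs.symm
    · exact h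
  have hmin : ∀ k : ℤ, p ^ (e - 1) • (k • z + x) ≠ 0 := by
    intro k hk
    have : e ≤ e - 1 := Nat.sInf_le ⟨k, hk⟩
    omega
  -- choose witness k₀, equal to 1 when e = b
  obtain ⟨k₀, hk₀, hk₀1⟩ : ∃ k₀ : ℤ, p ^ e • (k₀ • z + x) = 0 ∧ (e = b → k₀ = 1) := by
    by_cases h : e = b
    · refine ⟨1, ?_, fun _ => rfl⟩
      rw [h, one_zsmul, smul_add, hz, hx, add_zero]
    · obtain ⟨k, hk⟩ := heE
      exact ⟨k, hk, fun h' => absurd h' h⟩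
  have hordy : addOrderOf (k₀ • z + x) = p ^ e := ord_exact p e hp _ hk₀ (hmin k₀)
  obtain ⟨s, hs⟩ := AddSubgroup.mem_zmultiples_iff.mp (hr k₀)
  have hyez : ((p : ℤ) ^ e) • (k₀ • z + x) = 0 := by
    rw [show ((p:ℤ)^e) = ((p^e : ℕ) : ℤ) by push_cast; ring, natCast_zsmul]; exact hk₀
  -- (p * s) • (k₀ • z + x) = 0
  have hps : ((p : ℤ) * s) • (k₀ • z + x) = 0 := by
    rw [mul_smul, hs, smul_smul, hR, show (p:ℤ) * ((p:ℤ)^(b-1) * w) = w * (p:ℤ)^b by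
      rw [← mul_assoc, ← hpow b hb1, mul_comm]]
    rw [mul_smul, hxz, smul_zero]
  have hdvd : (p : ℤ) ^ e ∣ (p : ℤ) * s := by
    have := addOrderOf_dvd_iff_zsmul_eq_zero.mpr hps
    rwa [hordy, Nat.cast_pow] at this
  have hdvd' : (p : ℤ) ^ (e - 1) ∣ s := by
    rw [hpow e he1] at hdvd
    exact (mul_dvd_mul_iff_left hp0).mp hdvd
  obtain ⟨u, hu⟩ := hdvd'
  have hpu : ¬ (p : ℤ) ∣ u := by
    rintro ⟨u', rfl⟩
    apply hrx
    rw [← hs, hu, show (p:ℤ)^(e-1) * ((p:ℤ) * u') = u' * (p:ℤ)^e by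
      rw [hpow e he1]; ring]
    rw [mul_smul, hyez, smul_zero]
  -- the key equation (★)
  set c : ℤ := (p : ℤ) ^ (b - e) * w - u with hc
  have hstar : ((p : ℤ) ^ (e - 1) * c) • x = ((p : ℤ) ^ (e - 1) * (u * k₀)) • z := by
    have h1 : (R - s) • x = (s * k₀) • z := by
      rw [smul_add, smul_smul] at hs
      rw [sub_smul, ← hs]
      abel
    have h2 : R - s = (p : ℤ) ^ (e - 1) * c := by
      rw [hR, hu, hc, show (p : ℤ) ^ (b - 1) = (p : ℤ) ^ (e - 1) * (p : ℤ) ^ (b - e) by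
        rw [← pow_add]; congr 1; omega]
      ring
    rw [← h2, h1, hu]
    congr 1
    ring
  -- p does not divide c
  have hpc : ¬ (p : ℤ) ∣ c := by
    intro hdc
    by_cases hebcase : e = b
    · -- c = w - u case, k₀ = 1
      have hk1 : k₀ = 1 := hk₀1 hebcase
      obtain ⟨c₂, hc₂⟩ := hdc
      have hzero : ((p : ℤ) ^ (e - 1) * c) • x = 0 := by
        rw [hc₂, hebcase, show (p:ℤ)^(b-1) * ((p:ℤ) * c₂) = c₂ * (p:ℤ)^b by
          rw [hpow b hb1]; ring]
        rw [mul_smul, hxz, smul_zero]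
      rw [hzero, hk1, mul_one] at hstar
      have hordz : addOrderOf z = p ^ b := ord_exact p b hp z hz hz'
      have hdz : ((addOrderOf z : ℕ) : ℤ) ∣ (p : ℤ) ^ (e - 1) * u :=
        addOrderOf_dvd_iff_zsmul_eq_zero.mpr hstar.symm
      rw [hordz, Nat.cast_pow, hebcase, hpow b hb1, mul_comm ((p:ℤ)^(b-1)) u] at hdz
      rw [mul_comm ((p:ℤ)) ((p:ℤ)^(b-1))] at hdz
      rw [mul_comm u ((p:ℤ)^(b-1))] at hdz
      exact hpu ((mul_dvd_mul_iff_left (pow_ne_zero _ hp0)).mp hdz)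
    · -- e < b, c ≡ -u mod p
      apply hpu
      have : u = (p : ℤ) ^ (b - e) * w - c := by rw [hc]; ring
      rw [this]
      exact dvd_sub (Dvd.dvd.mul_right (dvd_pow_self _ (by omega)) w) hdc
  -- invert c mod p^b
  obtain ⟨d, c', hdc'⟩ : ∃ d c' : ℤ, d * (p : ℤ) ^ b + c' * c = 1 := by
    have : IsCoprime ((p : ℤ) ^ b) c :=
      IsCoprime.pow_left ((hpz.coprime_iff_not_dvd).mpr hpc)
    obtain ⟨a', b', hab'⟩ := this
    exact ⟨a', b', hab'⟩
  -- construct better k'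
  apply hmin (-(c' * (u * k₀)))
  -- goal: p ^ (e-1) • (k' • z + x) = 0
  have hcx : (c' * c) • x = (1 - d * (p : ℤ) ^ b) • x := by
    congr 1
    linarith [hdc']
  have goalz : ((p : ℤ) ^ (e - 1)) • ((-(c' * (u * k₀))) • z + x) = 0 := by
    linear_combination (norm := module) c' • hstar + (-((p:ℤ)^(e-1))) • hcx
      + ((p:ℤ)^(e-1) * d) • hxz
  rw [show ((p : ℤ) ^ (e - 1)) = ((p ^ (e-1) : ℕ) : ℤ) by push_cast; ring, natCast_zsmul] at goalz
  exact goalz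

private lemma main {X : Type*} [AddCommGroup X] (p : ℕ) (hp : p.Prime) :
    ∀ b a : ℕ, ∀ x₁ x : X, ∀ r : ℤ, b ≤ a → p ^ a • x₁ = 0 → (∀ a' < a, p ^ a' • x₁ ≠ 0) →
    p ^ b • x = 0 → (∀ b' < b, p ^ b' • x ≠ 0) →
    (∀ m : ℤ, r • x ∈ AddSubgroup.zmultiples (m • x₁ + x)) → (p : ℤ) ^ b ∣ r := by
  intro b
  induction b with
  | zero => intro a x₁ x r _ _ _ _ _ _; simpa using one_dvd r
  | succ b ih =>
    intro a x₁ x r hab ha ha' hb hb' hr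
    have ha1 : 1 ≤ a := by omega
    -- induction step: apply ih to (a-1, p•x₁, p•x)
    have hpb : (p : ℤ) ^ b ∣ r := by
      apply ih (a - 1) (p • x₁) (p • x) r (by omega)
      · rw [smul_smul, show p ^ (a-1) * p = p ^ a by rw [← pow_succ]; congr 1; omega]
        exact ha
      · intro a' ha'2
        rw [smul_smul, show p ^ a' * p = p ^ (a' + 1) by rw [pow_succ]]
        exact ha' (a' + 1) (by omega)
      · rw [smul_smul, show p ^ b * p = p ^ (b + 1) by rw [pow_succ]]
        exact hb
      · intro b' hb'2
        rw [smul_smul, show p ^ b' * p = p ^ (b' + 1) by rw [pow_succ]]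
        exact hb' (b' + 1) (by omega)
      · intro m
        obtain ⟨s, hs⟩ := AddSubgroup.mem_zmultiples_iff.mp (hr m)
        rw [AddSubgroup.mem_zmultiples_iff]
        refine ⟨s, ?_⟩
        have : m • (p • x₁) + p • x = p • (m • x₁ + x) := by
          rw [smul_add, smul_comm]
        rw [this, smul_comm, hs, smul_comm]
    obtain ⟨w, hw⟩ := hpb
    by_cases hpw : (p : ℤ) ∣ w
    · obtain ⟨w', hw'⟩ := hpw
      refine ⟨w', ?_⟩
      rw [hw, hw', pow_succ]
      ring
    · -- use crux with z = p^(a-b-1) • x₁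
      have hrx0 : r • x = 0 := by
        have := crux p hp (b + 1) (by omega) (p ^ (a - (b+1)) • x₁) x
          (by rw [smul_smul, show p^(b+1) * p^(a-(b+1)) = p^a by rw [← pow_add]; congr 1; omega]
              exact ha)
          (by rw [smul_smul, show p^(b+1-1) * p^(a-(b+1)) = p^(a-1) by
                rw [← pow_add]; congr 1; omega]
              exact ha' (a-1) (by omega))
          hb w hpw ?_
        · rw [Nat.add_sub_cancel] at this
          rw [hw]
          exact this
        · intro k
          have hkz : k • (p ^ (a - (b+1)) • x₁) = (k * (p ^ (a - (b+1)) : ℕ)) • x₁ := by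
            rw [mul_smul, natCast_zsmul]
          rw [show ((p:ℤ)^(b+1-1) * w) = r by rw [hw, Nat.add_sub_cancel], hkz]
          exact hr (k * (p ^ (a - (b+1)) : ℕ))
      -- conclude p^(b+1) ∣ r from exact order
      have hordx : addOrderOf x = p ^ (b + 1) := ord_exact p (b+1) hp x hb (by
        simpa using hb' b (by omega))
      have := addOrderOf_dvd_iff_zsmul_eq_zero.mpr hrx0
      rwa [hordx, Nat.cast_pow] at this

/-- Let `p` be prime, `X` a finite abelian `p`-group, `x₁ x ∈ X`, `a` (resp.
`b`) the smallest natural number with `p ^ a • x₁ = 0` (resp. `p ^ b • x = 0`),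
with `a ≥ b`. Let `r` be an integer such that for every integer `m`, `r • x`
lies in the subgroup generated by `m • x₁ + x`. Then `p ^ b` divides `r`; in
particular `r • x = 0`. -/
theorem stmt4 (p : ℕ) (hp : p.Prime) (X : Type*) [AddCommGroup X] [Fintype X]
    (hpgrp : ∀ g : X, ∃ k : ℕ, p ^ k • g = 0)
    (x₁ x : X) (a b : ℕ)
    (ha : p ^ a • x₁ = 0) (ha' : ∀ a' < a, p ^ a' • x₁ ≠ 0)
    (hb : p ^ b • x = 0) (hb' : ∀ b' < b, p ^ b' • x ≠ 0)
    (hab : b ≤ a) (r : ℤ)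
    (hr : ∀ m : ℤ, r • x ∈ AddSubgroup.zmultiples (m • x₁ + x)) :
    (p : ℤ) ^ b ∣ r ∧ r • x = 0 := by
  have hdvd : (p : ℤ) ^ b ∣ r := main p hp b a x₁ x r hab ha ha' hb hb' hr
  refine ⟨hdvd, ?_⟩
  obtain ⟨t, ht⟩ := hdvd
  rw [ht, mul_comm, mul_smul, show ((p:ℤ)^b) = ((p^b : ℕ) : ℤ) by push_cast; ring,
    natCast_zsmul, hb, smul_zero]
end

section
/- Let D be an abelian group (written multiplicatively) and D_c a subgroup of D such that the quotient group D/D_c is a free abelian group of finite rank. Let T be a subgroup of D and U a subgroup of T of finite index in T. Assume there exists an integer N₁ ≥ 1 such that every element of T of the form d^{N₁} with d ∈ D_c belongs to U. Then there exists an integer N ≥ 1 such that every element of T of the form d^{N} with d ∈ D belongs to U. -/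
lemma aux_sat (n : ℕ) (G : AddSubgroup (Fin n → ℤ)) :
    ∃ e : ℕ, 1 ≤ e ∧ ∀ (x : Fin n → ℤ) (k : ℕ), k ≠ 0 → k • x ∈ G → e • x ∈ G := by
  set G' : Submodule ℤ (Fin n → ℤ) := G.toIntSubmodule with hG'
  set Q := (Fin n → ℤ) ⧸ G'
  haveI : Module.Finite ℤ Q := Module.Finite.quotient ℤ G'
  set tQ := Submodule.torsion ℤ Q with htQ
  haveI : Module.Finite ℤ tQ := Module.Finite.iff_fg.mpr (IsNoetherian.noetherian tQ)
  haveI : Finite tQ := Module.finite_of_fg_torsion tQ (Submodule.torsion_isTorsion)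
  refine ⟨Nat.card tQ, Nat.card_pos, fun x k hk hkx => ?_⟩
  set y : Q := Submodule.Quotient.mk x with hy
  have hky : (k : ℤ) • y = 0 := by
    rw [hy, ← Submodule.Quotient.mk_smul, Submodule.Quotient.mk_eq_zero]
    have h : (k : ℤ) • x ∈ G := by simpa using hkx
    exact h
  have hyt : y ∈ tQ := by
    refine (Submodule.mem_torsion_iff (R := ℤ) y).mpr
      ⟨⟨(k : ℤ), mem_nonZeroDivisors_of_ne_zero (by exact_mod_cast hk)⟩, hky⟩
  set z : tQ := ⟨y, hyt⟩ with hz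
  have hcard : Nat.card tQ • z = 0 := by
    have := pow_card_eq_one' (G := Multiplicative tQ) (x := Multiplicative.ofAdd z)
    rw [← ofAdd_nsmul] at this
    exact Multiplicative.ofAdd.injective (by simp only [ofAdd_zero]; exact this)
  have : Nat.card tQ • y = 0 := by
    have h0 := congrArg (Subtype.val) hcard
    rw [AddSubmonoidClass.coe_nsmul] at h0
    simpa using h0
  have : Submodule.Quotient.mk (Nat.card tQ • x) = (0 : Q) := by
    rw [show ((Nat.card tQ • x : Fin n → ℤ)) = (Nat.card tQ : ℤ) • x by simp,
      Submodule.Quotient.mk_smul]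
    simpa using this
  have hmem : Nat.card tQ • x ∈ G' := (Submodule.Quotient.mk_eq_zero G').mp this
  exact hmem

/-- Let `D` be an abelian group and `D_c ≤ D` a subgroup with `D / D_c` free
abelian of finite rank. Let `T ≤ D` be a subgroup and `U ≤ T` a subgroup of
finite index in `T`. If there is an integer `N₁ ≥ 1` such that every element
of `T` of the form `d ^ N₁` with `d ∈ D_c` belongs to `U`, then there is an
integer `N ≥ 1` such that every element of `T` of the form `d ^ N` with
`d ∈ D` belongs to `U`. -/
theorem stmt5 (D : Type*) [CommGroup D] (Dc T U : Subgroup D)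
    (hfree : ∃ n : ℕ, Nonempty ((D ⧸ Dc) ≃* Multiplicative (Fin n → ℤ)))
    (hUT : U ≤ T) (hfin : (U.subgroupOf T).FiniteIndex)
    (hN₁ : ∃ N₁ : ℕ, 1 ≤ N₁ ∧ ∀ d ∈ Dc, d ^ N₁ ∈ T → d ^ N₁ ∈ U) :
    ∃ N : ℕ, 1 ≤ N ∧ ∀ d : D, d ^ N ∈ T → d ^ N ∈ U := by
  obtain ⟨n, ⟨φ⟩⟩ := hfree
  obtain ⟨N₁, hN₁pos, hN₁⟩ := hN₁
  set m := (U.subgroupOf T).index with hm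
  have hmpos : 1 ≤ m := Nat.one_le_iff_ne_zero.mpr hfin.index_ne_zero
  -- the homomorphism to the free abelian group
  set q : D →* Multiplicative (Fin n → ℤ) := φ.toMonoidHom.comp (QuotientGroup.mk' Dc) with hq
  have hker : ∀ d : D, q d = 1 → d ∈ Dc := by
    intro d hd
    have : QuotientGroup.mk' Dc d = 1 := by
      apply φ.injective
      simpa [hq] using hd
    exact (QuotientGroup.eq_one_iff d).mp this
  -- image of T, as an additive subgroup
  set G : AddSubgroup (Fin n → ℤ) := Subgroup.toAddSubgroup' (T.map q) with hG
  obtain ⟨e, hepos, he⟩ := aux_sat n G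
  refine ⟨e * (N₁ * m), Nat.mul_pos hepos (Nat.mul_pos hN₁pos hmpos), fun d hd => ?_⟩
  -- N • (toAdd (q d)) ∈ G
  have hqd : (e * (N₁ * m)) • Multiplicative.toAdd (q d) ∈ G := by
    have : q (d ^ (e * (N₁ * m))) ∈ T.map q := ⟨d ^ (e * (N₁ * m)), hd, rfl⟩
    rw [map_pow] at this
    exact (show Multiplicative.ofAdd ((e * (N₁ * m)) • Multiplicative.toAdd (q d)) ∈ T.map q by
      rw [ofAdd_nsmul, ofAdd_toAdd]; exact this)
  have hed : e • Multiplicative.toAdd (q d) ∈ G :=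
    he _ _ (Nat.mul_pos hepos (Nat.mul_pos hN₁pos hmpos)).ne' hqd
  -- get t ∈ T with q t = q d ^ e
  have : ∃ t ∈ T, q t = q d ^ e := by
    have hed' : Multiplicative.ofAdd (e • Multiplicative.toAdd (q d)) ∈ T.map q := hed
    obtain ⟨t, ht, hqt⟩ := hed'
    exact ⟨t, ht, by rw [hqt, ofAdd_nsmul, ofAdd_toAdd]⟩
  obtain ⟨t, htT, hqt⟩ := this
  set c : D := d ^ e * t⁻¹ with hc
  have hcDc : c ∈ Dc := by
    apply hker
    rw [hc, map_mul, map_pow, map_inv, hqt]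
    group
  -- t ^ m ∈ U
  have htm : t ^ m ∈ U := by
    have := Subgroup.pow_index_mem (U.subgroupOf T) ⟨t, htT⟩
    have h2 : ((⟨t, htT⟩ : T) ^ m : T) ∈ U.subgroupOf T := by
      simpa [hm] using this
    simpa [Subgroup.mem_subgroupOf] using h2
  have htNm : t ^ (N₁ * m) ∈ U := by
    rw [mul_comm, pow_mul]
    exact Subgroup.pow_mem U htm N₁
  -- rewrite d ^ N
  have hdN : d ^ (e * (N₁ * m)) = c ^ (N₁ * m) * t ^ (N₁ * m) := by
    rw [hc, ← mul_pow, pow_mul]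
    group
  -- c ^ (N₁ * m) ∈ T
  have hcT : c ^ (N₁ * m) ∈ T := by
    have : c ^ (N₁ * m) = d ^ (e * (N₁ * m)) * (t ^ (N₁ * m))⁻¹ := by
      rw [hdN]; group
    rw [this]
    exact mul_mem hd (inv_mem (hUT htNm))
  have hcU : c ^ (N₁ * m) ∈ U := by
    have := hN₁ (c ^ m) (Subgroup.pow_mem Dc hcDc m) (by rwa [← pow_mul, mul_comm])
    rwa [← pow_mul, mul_comm] at this
  rw [hdN]
  exact mul_mem hcU htNm
end

section
/- Let a ≥ 1 and let U be an open subgroup of finite index of the topological group (ℝˣ)ᵃ. Then there exist a matrix A ∈ GLₐ(ℤ) and a natural number e with 0 ≤ e ≤ a such that the automorphism φ_A of (ℝˣ)ᵃ defined by φ_A(x)_i = ∏_{j=1}^{a} x_j^{A_{ij}} maps U onto the subgroup {x ∈ (ℝˣ)ᵃ : x_i > 0 for all i ≤ e}; in particular U contains the subgroup of all tuples with every coordinate positive. -/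
noncomputable section
namespace Stmt7Aux
open Matrix Module Submodule



def sgn (u : ℝˣ) : ZMod 2 := if 0 < (u : ℝ) then 0 else 1

lemma sgn_eq_zero_iff {u : ℝˣ} : sgn u = 0 ↔ 0 < (u : ℝ) := by
  unfold sgn; split <;> simp_all

lemma sgn_mul (u v : ℝˣ) : sgn (u * v) = sgn u + sgn v := by
  have hu : (0:ℝ) < u ∨ (u:ℝ) < 0 := u.ne_zero.symm.lt_or_gt
  have hv : (0:ℝ) < v ∨ (v:ℝ) < 0 := v.ne_zero.symm.lt_or_gt
  unfold sgn
  rcases hu with hu | hu <;> rcases hv with hv | hv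
  · rw [if_pos hu, if_pos hv, if_pos (by exact_mod_cast mul_pos hu hv)]; ring
  · rw [if_pos hu, if_neg hv.not_gt,
      if_neg (by push_cast; exact (mul_neg_of_pos_of_neg hu hv).not_gt)]; ring
  · rw [if_neg hu.not_gt, if_pos hv,
      if_neg (by push_cast; exact (mul_neg_of_neg_of_pos hu hv).not_gt)]; ring
  · rw [if_neg hu.not_gt, if_neg hv.not_gt,
      if_pos (by push_cast; exact mul_pos_of_neg_of_neg hu hv)]; decide

def sgnHom : ℝˣ →* Multiplicative (ZMod 2) where
  toFun u := Multiplicative.ofAdd (sgn u)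
  map_one' := by simp [sgn]
  map_mul' u v := by
    show Multiplicative.ofAdd (sgn (u*v)) = Multiplicative.ofAdd (sgn u + sgn v)
    rw [sgn_mul]

lemma sgn_prod {ι : Type*} (s : Finset ι) (f : ι → ℝˣ) :
    sgn (∏ j ∈ s, f j) = ∑ j ∈ s, sgn (f j) := by
  induction s using Finset.cons_induction with
  | empty => simp [sgn]
  | cons i s hi ih => rw [Finset.prod_cons, Finset.sum_cons, sgn_mul, ih]

lemma sgn_pow (u : ℝˣ) (k : ℕ) : sgn (u ^ k) = (k : ZMod 2) * sgn u := by
  induction k with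
  | zero => simp [sgn]
  | succ k ih => rw [pow_succ, sgn_mul, ih]; push_cast; ring

lemma sgn_inv (u : ℝˣ) : sgn u⁻¹ = sgn u := by
  unfold sgn
  have : (0:ℝ) < ((u⁻¹ : ℝˣ) : ℝ) ↔ 0 < (u : ℝ) := by
    rw [Units.val_inv_eq_inv_val]; exact inv_pos
  simp only [this]

lemma sgn_zpow (u : ℝˣ) (m : ℤ) : sgn (u ^ m) = (m : ZMod 2) * sgn u := by
  have hneg : ∀ x : ZMod 2, -x = x := by decide
  induction m using Int.rec with
  | ofNat k => simpa using sgn_pow u k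
  | negSucc k =>
      rw [zpow_negSucc, ← inv_pow, sgn_pow, sgn_inv]
      congr 1
      rw [show (Int.negSucc k : ZMod 2) = -((k+1 : ℕ) : ZMod 2) by
        push_cast [Int.negSucc_eq]; ring, hneg]



open Matrix

lemma lift_det_one {n : Type*} [Fintype n] [DecidableEq n]
    (M : Matrix n n (ZMod 2)) (hM : M.det = 1) :
    ∃ A : Matrix n n ℤ, A.det = 1 ∧ A.map (Int.cast : ℤ → ZMod 2) = M := by
  have key : ∀ N : Matrix n n (ZMod 2), N.det = 1 →
      ∃ A : Matrix n n ℤ, A.det = 1 ∧ A.map (Int.cast : ℤ → ZMod 2) = N := by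
    intro N
    induction N using Matrix.diagonal_transvection_induction with
    | hdiag D hD =>
        intro h1
        have hD1 : ∀ i, D i = 1 := by
          intro i
          have hne : D i ≠ 0 := by
            intro h0
            rw [det_diagonal] at h1
            exact one_ne_zero ((h1 ▸ (Finset.prod_eq_zero (Finset.mem_univ i) h0)) : (1:ZMod 2) = 0)
          have : ∀ x : ZMod 2, x ≠ 0 → x = 1 := by decide
          exact this _ hne
        refine ⟨1, det_one, ?_⟩
        have : D = fun _ => 1 := funext hD1
        rw [this, diagonal_one]
        ext i j
        by_cases h : i = j <;> simp [Matrix.map, Matrix.one_apply, h]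
    | htransvec t =>
        intro _
        refine ⟨Matrix.transvection t.i t.j ((t.c).val : ℤ), ?_, ?_⟩
        · exact Matrix.det_transvection_of_ne _ _ t.hij _
        · show (transvection t.i t.j ((t.c).val : ℤ)).map _ = transvection t.i t.j t.c
          unfold Matrix.transvection
          ext i j
          simp [Matrix.map, Matrix.one_apply, Matrix.single_apply, ZMod.natCast_val, ZMod.intCast_cast,
            ZMod.cast_id, apply_ite (Int.cast : ℤ → ZMod 2)]
    | hmul A B hA hB =>
        intro hAB
        have h2 : ∀ x y : ZMod 2, x * y = 1 → x = 1 ∧ y = 1 := by decide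
        rw [det_mul] at hAB
        obtain ⟨hA1, hB1⟩ := h2 _ _ hAB
        obtain ⟨A', hdA, hmA⟩ := hA hA1
        obtain ⟨B', hdB, hmB⟩ := hB hB1
        refine ⟨A' * B', by rw [det_mul, hdA, hdB, one_mul], ?_⟩
        rw [← hmA, ← hmB]
        ext i j
        simp [Matrix.map, Matrix.mul_apply]
  exact key M hM



open Module Submodule

lemma exists_lequiv (a : ℕ) (S : Submodule (ZMod 2) (Fin a → ZMod 2)) :
    ∃ (e : ℕ) (g : (Fin a → ZMod 2) ≃ₗ[ZMod 2] (Fin a → ZMod 2)), e ≤ a ∧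
      ∀ v, v ∈ S ↔ (∀ i : Fin a, (i : ℕ) < e → g v i = 0) := by
  have hV : finrank (ZMod 2) (Fin a → ZMod 2) = a := Module.finrank_fin_fun (ZMod 2)
  set d := finrank (ZMod 2) S with hd
  have hdle : d ≤ a := hV ▸ S.finrank_le
  set e := a - d with he
  have heq : e + d = a := by omega
  obtain ⟨T, hT⟩ := Submodule.exists_isCompl S
  have hdT : finrank (ZMod 2) T = e := by
    have := Submodule.finrank_add_eq_of_isCompl hT
    rw [hV] at this; omega
  let eS : S ≃ₗ[ZMod 2] (Fin d → ZMod 2) := (Module.finBasis (ZMod 2) S).equivFun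
  let eT : T ≃ₗ[ZMod 2] (Fin e → ZMod 2) :=
    ((Module.finBasis (ZMod 2) T).reindex (finCongr hdT)).equivFun
  let π := (Submodule.prodEquivOfIsCompl S T hT).symm
  let q : (Fin a → ZMod 2) ≃ₗ[ZMod 2] (Fin e → ZMod 2) × (Fin d → ZMod 2) :=
    π ≪≫ₗ (eS.prodCongr eT) ≪≫ₗ (LinearEquiv.prodComm (ZMod 2) _ _)
  let ea : Fin a ≃ Fin e ⊕ Fin d := (finCongr heq.symm).trans finSumFinEquiv.symm
  let r : ((Fin e → ZMod 2) × (Fin d → ZMod 2)) ≃ₗ[ZMod 2] (Fin a → ZMod 2) :=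
    (LinearEquiv.sumArrowLequivProdArrow (Fin e) (Fin d) (ZMod 2) (ZMod 2)).symm ≪≫ₗ
      LinearEquiv.funCongrLeft (ZMod 2) (ZMod 2) ea
  refine ⟨e, q ≪≫ₗ r, Nat.sub_le _ _, fun v => ?_⟩
  have happ : ∀ (i : Fin a) (hi : (i : ℕ) < e),
      (q ≪≫ₗ r) v i = (q v).1 (⟨(i : ℕ), hi⟩ : Fin e) := by
    intro i hi
    have hea : ea i = Sum.inl (⟨(i : ℕ), hi⟩ : Fin e) := by
      show finSumFinEquiv.symm (finCongr heq.symm i) = _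
      exact (finSumFinEquiv_symm_apply_castAdd (⟨(i:ℕ), hi⟩ : Fin e))
    show (LinearEquiv.funCongrLeft (ZMod 2) (ZMod 2) ea) ((LinearEquiv.sumArrowLequivProdArrow
      (Fin e) (Fin d) (ZMod 2) (ZMod 2)).symm (q v)) i = _
    rw [LinearEquiv.funCongrLeft_apply]
    show ((LinearEquiv.sumArrowLequivProdArrow (Fin e) (Fin d) (ZMod 2) (ZMod 2)).symm
      ((q v).1, (q v).2)) (ea i) = _
    rw [hea, LinearEquiv.sumArrowLequivProdArrow_symm_apply_inl]
  have hmem : v ∈ S ↔ (q v).1 = 0 := by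
    have h1 : (q v).1 = eT ((π v).2) := rfl
    rw [h1]
    constructor
    · intro hv
      have : (π v).2 = 0 :=
        (Submodule.prodEquivOfIsCompl_symm_apply_snd_eq_zero S T hT).2 hv
      rw [this, map_zero]
    · intro h
      have h2 : (π v).2 = 0 := by
        apply eT.injective; rw [h, map_zero]
      exact (Submodule.prodEquivOfIsCompl_symm_apply_snd_eq_zero S T hT).1 h2
  rw [hmem]
  constructor
  · intro h i hi
    rw [happ i hi, h]; rfl
  · intro h
    funext j
    have hj : ((⟨(j : ℕ), by omega⟩ : Fin a) : ℕ) < e := by simpa using j.isLt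
    have := h ⟨(j : ℕ), by omega⟩ hj
    rw [happ _ hj] at this
    simpa using this

variable {a : ℕ}

/-- the automorphism of `(ℝˣ)ᵃ` attached to an integer matrix. -/
def phi (A : Matrix (Fin a) (Fin a) ℤ) (x : Fin a → ℝˣ) : Fin a → ℝˣ :=
  fun i => ∏ j, x j ^ A i j

lemma zpow_sum {G : Type*} [CommGroup G] (x : G) {ι : Type*} (s : Finset ι) (f : ι → ℤ) :
    x ^ (∑ j ∈ s, f j) = ∏ j ∈ s, x ^ f j := by
  induction s using Finset.cons_induction with
  | empty => simp
  | cons i s hi ih => rw [Finset.prod_cons, Finset.sum_cons, _root_.zpow_add, ih]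

lemma phi_mul (A B : Matrix (Fin a) (Fin a) ℤ) (x : Fin a → ℝˣ) :
    phi (A * B) x = phi A (phi B x) := by
  funext i
  show ∏ k, x k ^ (A * B) i k = ∏ j, (∏ k, x k ^ B j k) ^ A i j
  have : ∀ j, (∏ k, x k ^ B j k) ^ A i j = ∏ k, x k ^ (A i j * B j k) := by
    intro j
    rw [← Finset.prod_zpow]
    congr 1; funext k; rw [← _root_.zpow_mul, mul_comm (B j k)]
  simp only [this]
  rw [Finset.prod_comm]
  congr 1; funext k
  rw [Matrix.mul_apply, zpow_sum]

lemma phi_one (x : Fin a → ℝˣ) : phi (1 : Matrix (Fin a) (Fin a) ℤ) x = x := by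
  funext i
  show ∏ j, x j ^ (1 : Matrix (Fin a) (Fin a) ℤ) i j = x i
  rw [Finset.prod_eq_single i]
  · simp [Matrix.one_apply]
  · intro j _ hj
    simp [Matrix.one_apply, Ne.symm hj]
  · simp

lemma sgn_phi (A : Matrix (Fin a) (Fin a) ℤ) (x : Fin a → ℝˣ) :
    (fun i => sgn (phi A x i)) = (A.map (Int.cast : ℤ → ZMod 2)) *ᵥ (fun i => sgn (x i)) := by
  funext i
  show sgn (∏ j, x j ^ A i j) = _
  rw [sgn_prod]
  simp only [sgn_zpow]
  rfl

end Stmt7Aux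

open Stmt7Aux Matrix in
/-- Let `a ≥ 1` and let `U` be an open finite-index subgroup of `(ℝˣ)ᵃ`. Then
there are a matrix `A ∈ GLₐ(ℤ)` and `e ≤ a` such that the automorphism
`φ_A (x) i = ∏ j, (x j) ^ (A i j)` maps `U` onto the subgroup
`{x : x i > 0 for all i < e}`; in particular `U` contains all tuples with
every coordinate positive. -/
theorem stmt7 (a : ℕ) (ha : 1 ≤ a) (U : Subgroup (Fin a → ℝˣ))
    (hopen : IsOpen (U : Set (Fin a → ℝˣ))) (hfin : U.FiniteIndex) :
    ∃ (A : Matrix (Fin a) (Fin a) ℤ) (e : ℕ), IsUnit A.det ∧ e ≤ a ∧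
      ((fun x : Fin a → ℝˣ => fun i => ∏ j, (x j) ^ (A i j)) '' (U : Set (Fin a → ℝˣ))
        = {x : Fin a → ℝˣ | ∀ i : Fin a, (i : ℕ) < e → (0 : ℝ) < (x i : ℝ)}) ∧
      (∀ x : Fin a → ℝˣ, (∀ i, (0 : ℝ) < (x i : ℝ)) → x ∈ U) := by
  classical
  -- all-positive tuples belong to U
  have hpos : ∀ x : Fin a → ℝˣ, (∀ i, (0 : ℝ) < (x i : ℝ)) → x ∈ U := by
    intro x hx
    have hn : U.index ≠ 0 := hfin.index_ne_zero
    set n := U.index with hndef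
    let y : Fin a → ℝˣ := fun i =>
      Units.mk0 ((x i : ℝ) ^ ((n : ℝ)⁻¹)) (ne_of_gt (Real.rpow_pos_of_pos (hx i) _))
    have hyx : y ^ n = x := by
      funext i
      apply Units.ext
      show ((y i : ℝˣ) : ℝ) ^ n = (x i : ℝ)
      exact Real.rpow_inv_natCast_pow (hx i).le hn
    rw [← hyx]
    exact U.pow_index_mem y
  -- the sign image submodule
  let sgnv : (Fin a → ℝˣ) → (Fin a → ZMod 2) := fun x i => sgn (x i)
  have sgnv_mul : ∀ x y, sgnv (x * y) = sgnv x + sgnv y := by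
    intro x y; funext i; exact sgn_mul (x i) (y i)
  let S : Submodule (ZMod 2) (Fin a → ZMod 2) :=
    { carrier := sgnv '' (U : Set (Fin a → ℝˣ))
      add_mem' := by
        rintro _ _ ⟨u, hu, rfl⟩ ⟨v, hv, rfl⟩
        exact ⟨u * v, mul_mem hu hv, sgnv_mul u v⟩
      zero_mem' := ⟨1, one_mem U, by funext i; simp [sgnv, sgn]⟩
      smul_mem' := by
        intro c x hx
        have : c = 0 ∨ c = 1 := by revert c; decide
        rcases this with rfl | rfl
        · rw [zero_smul]; exact ⟨1, one_mem U, by funext i; simp [sgnv, sgn]⟩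
        · rw [one_smul]; exact hx }
  -- membership in U is detected by signs
  have hUS : ∀ x : Fin a → ℝˣ, x ∈ U ↔ sgnv x ∈ S := by
    intro x
    constructor
    · intro hx; exact ⟨x, hx, rfl⟩
    · rintro ⟨u, hu, huv⟩
      have hsame : ∀ i, sgn (u i) = sgn (x i) := fun i => congrFun huv i
      have hq : ∀ i, (0:ℝ) < ((u⁻¹ * x) i : ℝ) := by
        intro i
        have h1 : ((u⁻¹ * x) i : ℝˣ) = (u i)⁻¹ * x i := rfl
        rw [h1, Units.val_mul, Units.val_inv_eq_inv_val]
        rcases (u i).ne_zero.symm.lt_or_gt with hposu | hneg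
        · have hxpos : (0:ℝ) < x i := by
            have h0 : sgn (x i) = 0 := (hsame i).symm.trans (sgn_eq_zero_iff.2 hposu)
            exact sgn_eq_zero_iff.1 h0
          exact mul_pos (inv_pos.2 hposu) hxpos
        · have hxneg : (x i : ℝ) < 0 := by
            rcases (x i).ne_zero.symm.lt_or_gt with hxpos | hxneg
            · have h0 : sgn (u i) = 0 := (hsame i).trans (sgn_eq_zero_iff.2 hxpos)
              exact absurd (sgn_eq_zero_iff.1 h0) (lt_asymm hneg)
            · exact hxneg
          exact mul_pos_of_neg_of_neg (inv_neg''.2 hneg) hxneg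
      have : u⁻¹ * x ∈ U := hpos _ hq
      have := mul_mem hu this
      rwa [mul_inv_cancel_left] at this
  obtain ⟨e, g, he, hgS⟩ := exists_lequiv a S
  -- matrix of g
  set M2 := LinearMap.toMatrix' (g : (Fin a → ZMod 2) →ₗ[ZMod 2] (Fin a → ZMod 2)) with hM2
  have hgv : ∀ v, g v = M2 *ᵥ v := by
    intro v
    rw [hM2, ← Matrix.toLin'_apply, Matrix.toLin'_toMatrix']
    rfl
  have hdet : M2.det = 1 := by
    have hcomp : M2 * LinearMap.toMatrix'
        (g.symm : (Fin a → ZMod 2) →ₗ[ZMod 2] (Fin a → ZMod 2)) = 1 := by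
      rw [hM2, ← LinearMap.toMatrix'_comp]
      have : (g : (Fin a → ZMod 2) →ₗ[ZMod 2] (Fin a → ZMod 2)).comp
          (g.symm : (Fin a → ZMod 2) →ₗ[ZMod 2] (Fin a → ZMod 2)) = LinearMap.id := by
        ext v; simp
      rw [this, LinearMap.toMatrix'_id]
    have := congrArg Matrix.det hcomp
    rw [det_mul, det_one] at this
    have h2 : ∀ x y : ZMod 2, x * y = 1 → x = 1 := by decide
    exact h2 _ _ this
  obtain ⟨A, hAdet, hAmap⟩ := lift_det_one M2 hdet
  set B := A.adjugate with hB
  have hAB : A * B = 1 := by rw [hB, Matrix.mul_adjugate, hAdet, one_smul]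
  refine ⟨A, e, hAdet ▸ isUnit_one, he, ?_, hpos⟩
  have hφ : (fun x : Fin a → ℝˣ => fun i => ∏ j, (x j) ^ (A i j)) = phi A := rfl
  rw [hφ]
  ext y
  constructor
  · rintro ⟨x, hxU, rfl⟩
    intro i hi
    have hxS : sgnv x ∈ S := (hUS x).1 hxU
    have := (hgS (sgnv x)).1 hxS i hi
    rw [hgv] at this
    have hsgn : sgn (phi A x i) = 0 := by
      have h := congrFun (sgn_phi A x) i
      rw [hAmap] at h
      exact h.trans this
    exact sgn_eq_zero_iff.1 hsgn
  · intro hy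
    refine ⟨phi B y, ?_, by rw [← phi_mul, hAB, phi_one]⟩
    rw [SetLike.mem_coe, hUS, hgS]
    intro i hi
    rw [hgv]
    have h1 : sgnv (phi B y) = (B.map (Int.cast : ℤ → ZMod 2)) *ᵥ sgnv y := sgn_phi B y
    have hmap : (A.map (Int.cast : ℤ → ZMod 2)) * (B.map (Int.cast : ℤ → ZMod 2)) = 1 := by
      have hABmap : ((A * B).map (Int.cast : ℤ → ZMod 2))
          = (A.map (Int.cast : ℤ → ZMod 2)) * (B.map (Int.cast : ℤ → ZMod 2)) := by
        ext i j
        simp only [Matrix.map_apply, Matrix.mul_apply]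
        push_cast
        rfl
      rw [← hABmap, hAB]
      exact Matrix.map_one _ (by simp) (by simp)
    rw [h1, Matrix.mulVec_mulVec, ← hAmap, hmap, Matrix.one_mulVec]
    exact sgn_eq_zero_iff.2 (hy i hi)
end
end

section
/- Let a ≥ 1 and let U be an open subgroup of finite index of the topological group (ℝˣ)ᵃ. Then there exist a natural number e with 0 ≤ e ≤ a and a continuous group homomorphism f : (ℂˣ)ᵉ × (ℝˣ)^{a−e} → (ℝˣ)ᵃ whose image is exactly U. -/
noncomputable section Stmt8Aux

/-- sign bit of a real unit -/
def stmt8sb (x : ℝˣ) : ZMod 2 := if 0 < (x : ℝ) then 0 else 1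

lemma stmt8sb_neg {x : ℝˣ} (hx : (x:ℝ) < 0) : stmt8sb x = 1 := by
  simp [stmt8sb, not_lt.mpr hx.le, asymm hx]

lemma stmt8sb_pos {x : ℝˣ} (hx : 0 < (x:ℝ)) : stmt8sb x = 0 := by
  simp [stmt8sb, hx]

lemma stmt8_pos_or_neg (x : ℝˣ) : 0 < (x:ℝ) ∨ (x:ℝ) < 0 :=
  (lt_or_gt_of_ne x.ne_zero).symm.imp id id

lemma stmt8sb_mul (x y : ℝˣ) : stmt8sb (x * y) = stmt8sb x + stmt8sb y := by
  rcases stmt8_pos_or_neg x with hx | hx <;> rcases stmt8_pos_or_neg y with hy | hy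
  · rw [stmt8sb_pos hx, stmt8sb_pos hy, stmt8sb_pos (x := x*y) (by simpa using mul_pos hx hy)]
    decide
  · rw [stmt8sb_pos hx, stmt8sb_neg hy, stmt8sb_neg (x := x*y) (by simpa using mul_neg_of_pos_of_neg hx hy)]
    decide
  · rw [stmt8sb_neg hx, stmt8sb_pos hy, stmt8sb_neg (x := x*y) (by simpa using mul_neg_of_neg_of_pos hx hy)]
    decide
  · rw [stmt8sb_neg hx, stmt8sb_neg hy, stmt8sb_pos (x := x*y) (by simpa using mul_pos_of_neg_of_neg hx hy)]
    decide

variable {a : ℕ}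

/-- lift of a sign vector -/
def stmt8iota (w : Fin a → ZMod 2) : Fin a → ℝˣ := fun j => if w j = 0 then 1 else -1

lemma stmt8_zmod2_cases (x : ZMod 2) : x = 0 ∨ x = 1 := by revert x; decide

lemma stmt8_one_ne_zero : (1 : ZMod 2) ≠ 0 := by decide

lemma stmt8iota_add (v w : Fin a → ZMod 2) :
    stmt8iota (v + w) = stmt8iota v * stmt8iota w := by
  have h11 : (1 + 1 : ZMod 2) = 0 := by decide
  funext j
  simp only [stmt8iota, Pi.add_apply, Pi.mul_apply]
  rcases stmt8_zmod2_cases (v j) with h1 | h1 <;> rcases stmt8_zmod2_cases (w j) with h2 | h2 <;>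
    simp [h1, h2, h11]

lemma stmt8iota_zero : stmt8iota (0 : Fin a → ZMod 2) = 1 := by
  funext j; simp [stmt8iota]

lemma stmt8sb_iota (w : Fin a → ZMod 2) (j : Fin a) : stmt8sb (stmt8iota w j) = w j := by
  rcases stmt8_zmod2_cases (w j) with h | h <;> simp [stmt8iota, h, stmt8sb]

def stmt8nu (u : Fin a → ℝˣ) : Fin a → ZMod 2 := fun j => stmt8sb (u j)

lemma stmt8nu_mul (u v : Fin a → ℝˣ) : stmt8nu (u * v) = stmt8nu u + stmt8nu v := by
  funext j; exact stmt8sb_mul (u j) (v j)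

def stmt8pos (u : Fin a → ℝˣ) : Fin a → ℝˣ :=
  fun j => Units.mk0 |(u j : ℝ)| (abs_ne_zero.mpr (u j).ne_zero)

lemma stmt8pos_pos (u : Fin a → ℝˣ) (j : Fin a) : 0 < (stmt8pos u j : ℝ) := by
  simp [stmt8pos, abs_pos, (u j).ne_zero]

lemma stmt8_decomp (u : Fin a → ℝˣ) : u = stmt8iota (stmt8nu u) * stmt8pos u := by
  funext j
  ext
  rcases stmt8_pos_or_neg (u j) with h | h
  · simp [stmt8iota, stmt8nu, stmt8sb_pos h, stmt8pos, abs_of_pos h]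
  · simp [stmt8iota, stmt8nu, stmt8sb_neg h, stmt8pos, abs_of_neg h]

lemma stmt8iota_sum {ι : Type*} (s : Finset ι) (v : ι → Fin a → ZMod 2) :
    stmt8iota (∑ i ∈ s, v i) = ∏ i ∈ s, stmt8iota (v i) := by
  classical
  induction s using Finset.induction with
  | empty => simp [stmt8iota_zero]
  | @insert i s h ih => simp [Finset.sum_insert h, Finset.prod_insert h, stmt8iota_add, ih]

/-- locally constant functions of the sign are continuous -/
lemma stmt8_cont_sign {X : Type*} [TopologicalSpace X] (A B : X)
    (f : ℝˣ → X) (hf : ∀ x, f x = if 0 < (x:ℝ) then A else B) : Continuous f := by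
  rw [continuous_iff_continuousAt]
  intro x
  rcases stmt8_pos_or_neg x with h | h
  · apply Filter.EventuallyEq.continuousAt (y := A)
    have hop : IsOpen {y : ℝˣ | 0 < (y : ℝ)} := isOpen_Ioi.preimage Units.continuous_val
    filter_upwards [hop.mem_nhds h] with y hy
    simp [hf y, hy]
  · apply Filter.EventuallyEq.continuousAt (y := B)
    have hop : IsOpen {y : ℝˣ | (y : ℝ) < 0} := isOpen_Iio.preimage Units.continuous_val
    filter_upwards [hop.mem_nhds h] with y hy
    simp [hf y, not_lt.mpr (le_of_lt hy)]

/-- absolute value maps -/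
def stmt8rabs : ℝˣ →* ℝˣ :=
  MonoidHom.mk' (fun x => Units.mk0 |(x:ℝ)| (abs_ne_zero.mpr x.ne_zero))
    (by intro x y; ext; simp [abs_mul])

def stmt8cabs : ℂˣ →* ℝˣ :=
  MonoidHom.mk' (fun z => Units.mk0 (‖(z:ℂ)‖) (by simp [z.ne_zero]))
    (by intro x y; ext; simp [map_mul])

lemma stmt8rabs_val (x : ℝˣ) : (stmt8rabs x : ℝ) = |(x:ℝ)| := rfl

lemma stmt8cabs_val (z : ℂˣ) : (stmt8cabs z : ℝ) = ‖(z:ℂ)‖ := rfl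

lemma stmt8rabs_cont : Continuous stmt8rabs := by
  rw [Units.continuous_iff]
  refine ⟨continuous_abs.comp Units.continuous_val, ?_⟩
  have h : (fun x : ℝˣ => ((stmt8rabs x)⁻¹ : ℝ)) = fun x : ℝˣ => (|(x:ℝ)|)⁻¹ := by
    funext x; rw [← Units.val_inv_eq_inv_val]; rfl
  show Continuous fun x : ℝˣ => ((stmt8rabs x)⁻¹ : ℝ)
  rw [h]
  exact (continuous_abs.comp Units.continuous_val).inv₀ fun x => abs_ne_zero.mpr x.ne_zero

lemma stmt8cabs_cont : Continuous stmt8cabs := by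
  rw [Units.continuous_iff]
  refine ⟨continuous_norm.comp Units.continuous_val, ?_⟩
  have h : (fun z : ℂˣ => ((stmt8cabs z)⁻¹ : ℝ)) = fun z : ℂˣ => (‖(z:ℂ)‖)⁻¹ := by
    funext z; rw [← Units.val_inv_eq_inv_val]; rfl
  show Continuous fun z : ℂˣ => ((stmt8cabs z)⁻¹ : ℝ)
  rw [h]
  exact (continuous_norm.comp Units.continuous_val).inv₀ fun z => by
    simpa using z.ne_zero

end Stmt8Aux

set_option maxHeartbeats 1000000 in
/-- Let `a ≥ 1` and let `U` be an open finite-index subgroup of `(ℝˣ)ᵃ`. Then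
there exist `e ≤ a` and a continuous group homomorphism
`f : (ℂˣ)ᵉ × (ℝˣ)^(a-e) → (ℝˣ)ᵃ` whose image is exactly `U`. -/
theorem stmt8 (a : ℕ) (ha : 1 ≤ a) (U : Subgroup (Fin a → ℝˣ))
    (hopen : IsOpen (U : Set (Fin a → ℝˣ))) (hfin : U.FiniteIndex) :
    ∃ (e : ℕ) (f : ((Fin e → ℂˣ) × (Fin (a - e) → ℝˣ)) →* (Fin a → ℝˣ)),
      e ≤ a ∧ Continuous f ∧ Set.range f = (U : Set (Fin a → ℝˣ)) := by
  classical
  haveI : Fact (Nat.Prime 2) := ⟨by norm_num⟩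
  -- the positive orthant is contained in U
  have hP : ∀ u : Fin a → ℝˣ, (∀ j, 0 < (u j : ℝ)) → u ∈ U := by
    intro u hu
    set n := U.index with hn
    have hn0 : n ≠ 0 := hfin.index_ne_zero
    set v : Fin a → ℝˣ := fun j =>
      Units.mk0 ((u j : ℝ) ^ ((n : ℝ)⁻¹))
        (ne_of_gt (Real.rpow_pos_of_pos (hu j) _)) with hv
    have hvn : v ^ n = u := by
      funext j
      ext
      rw [Pi.pow_apply, Units.val_pow_eq_pow_val]
      exact Real.rpow_inv_natCast_pow (hu j).le hn0
    rw [← hvn]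
    exact Subgroup.pow_index_mem U v
  -- the sign subgroup
  set Vadd : AddSubgroup (Fin a → ZMod 2) :=
    { carrier := {w | stmt8iota w ∈ U}
      zero_mem' := by
        simp only [Set.mem_setOf_eq, stmt8iota_zero]; exact one_mem U
      add_mem' := by
        intro v w hv hw
        simp only [Set.mem_setOf_eq, stmt8iota_add]
        exact mul_mem hv hw
      neg_mem' := by
        intro w hw
        have hneg : -w = w := funext fun j => CharTwo.neg_eq (w j)
        simpa [hneg] using hw } with hVadd
  set W : Submodule (ZMod 2) (Fin a → ZMod 2) := AddSubgroup.toZModSubmodule 2 Vadd with hW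
  have hmemW : ∀ w, w ∈ W ↔ stmt8iota w ∈ U := fun w => Iff.rfl
  have hposU : ∀ u : Fin a → ℝˣ, stmt8pos u ∈ U := fun u => hP _ (stmt8pos_pos u)
  have hmemU : ∀ u : Fin a → ℝˣ, u ∈ U ↔ stmt8nu u ∈ W := by
    intro u
    rw [hmemW]
    constructor
    · intro hu
      have h1 : stmt8iota (stmt8nu u) = u * (stmt8pos u)⁻¹ :=
        eq_mul_inv_of_mul_eq (stmt8_decomp u).symm
      rw [h1]
      exact mul_mem hu (inv_mem (hposU u))
    · intro hiu
      rw [stmt8_decomp u]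
      exact mul_mem hiu (hposU u)
  -- dimension count
  set d := Module.finrank (ZMod 2) W with hd
  have hdle : d ≤ a := by
    have := Submodule.finrank_le W
    rwa [Module.finrank_pi, Fintype.card_fin] at this
  set e := a - d with he
  have hae : a - e = d := Nat.sub_sub_self hdle
  let b : Module.Basis (Fin (a - e)) (ZMod 2) W :=
    (Module.finBasis (ZMod 2) W).reindex (finCongr hae.symm)
  -- the homomorphism
  set sgn : ((Fin e → ℂˣ) × (Fin (a - e) → ℝˣ)) → (Fin a → ℝˣ) := fun p =>
    stmt8iota (∑ i, stmt8sb (p.2 i) • ((b i : Fin a → ZMod 2))) with hsgn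
  set mag : ((Fin e → ℂˣ) × (Fin (a - e) → ℝˣ)) → (Fin a → ℝˣ) := fun p j =>
    if h : (j : ℕ) < e then stmt8cabs (p.1 ⟨j, h⟩)
      else stmt8rabs (p.2 ⟨(j:ℕ) - e, by omega⟩) with hmag
  have hmul : ∀ p q, (sgn (p*q) * mag (p*q)) = (sgn p * mag p) * (sgn q * mag q) := by
    intro p q
    have h1 : (∑ i, stmt8sb ((p*q).2 i) • ((b i : Fin a → ZMod 2)))
        = (∑ i, stmt8sb (p.2 i) • ((b i : Fin a → ZMod 2)))
          + (∑ i, stmt8sb (q.2 i) • ((b i : Fin a → ZMod 2))) := by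
      rw [← Finset.sum_add_distrib]
      refine Finset.sum_congr rfl fun i _ => ?_
      rw [show (p*q).2 i = p.2 i * q.2 i from rfl, stmt8sb_mul, add_smul]
    have h2 : mag (p*q) = mag p * mag q := by
      funext j
      simp only [hmag, Pi.mul_apply]
      by_cases h : (j : ℕ) < e
      · simp only [dif_pos h]
        rw [show (p*q).1 ⟨j, h⟩ = p.1 ⟨j, h⟩ * q.1 ⟨j, h⟩ from rfl, map_mul]
      · simp only [dif_neg h]
        rw [show (p*q).2 _ = p.2 _ * q.2 _ from rfl, map_mul]
    rw [h2, hsgn]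
    simp only [h1, stmt8iota_add]
    exact mul_mul_mul_comm _ _ _ _
  set F : ((Fin e → ℂˣ) × (Fin (a - e) → ℝˣ)) →* (Fin a → ℝˣ) :=
    MonoidHom.mk' (fun p => sgn p * mag p) hmul with hF
  have hsgncont : Continuous sgn := by
    have hrw : sgn = fun p => ∏ i, stmt8iota (stmt8sb (p.2 i) • ((b i : Fin a → ZMod 2))) := by
      funext p
      rw [hsgn]
      exact stmt8iota_sum _ _
    rw [hrw]
    apply continuous_finset_prod
    intro i _
    have : Continuous fun x : ℝˣ =>
        stmt8iota (stmt8sb x • ((b i : Fin a → ZMod 2))) := by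
      apply stmt8_cont_sign (stmt8iota ((0 : ZMod 2) • ((b i : Fin a → ZMod 2))))
        (stmt8iota ((1 : ZMod 2) • ((b i : Fin a → ZMod 2))))
      intro x
      by_cases h : 0 < (x:ℝ)
      · simp [h, stmt8sb_pos h]
      · have hneg : (x:ℝ) < 0 := (stmt8_pos_or_neg x).resolve_left h
        simp [h, stmt8sb_neg hneg]
    exact this.comp ((continuous_apply i).comp continuous_snd)
  have hmagcont : Continuous mag := by
    apply continuous_pi
    intro j
    rw [hmag]
    by_cases h : (j : ℕ) < e
    · simp only [dif_pos h]
      exact stmt8cabs_cont.comp ((continuous_apply _).comp continuous_fst)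
    · simp only [dif_neg h]
      exact stmt8rabs_cont.comp ((continuous_apply _).comp continuous_snd)
  have hcont : Continuous F := hsgncont.mul hmagcont
  refine ⟨e, F, Nat.sub_le a d, hcont, ?_⟩
  ext u
  simp only [SetLike.mem_coe, Set.mem_range]
  constructor
  · rintro ⟨p, rfl⟩
    show sgn p * mag p ∈ U
    apply mul_mem
    · simp only [hsgn]
      exact (hmemW _).mp (Submodule.sum_mem W fun i _ => W.smul_mem _ (b i).2)
    · apply hP
      intro j
      simp only [hmag]
      by_cases h : (j : ℕ) < e
      · rw [dif_pos h, stmt8cabs_val]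
        exact norm_pos_iff.mpr ((p.1 ⟨j, h⟩)).ne_zero
      · rw [dif_neg h, stmt8rabs_val]
        exact abs_pos.mpr (p.2 _).ne_zero
  · intro hu
    have hWu : stmt8nu u ∈ W := (hmemU u).mp hu
    set c : Fin (a - e) → ZMod 2 := fun i => b.repr ⟨stmt8nu u, hWu⟩ i with hc
    set z : Fin e → ℂˣ := fun i =>
      Units.mk0 ((stmt8pos u ⟨i, by omega⟩ : ℝ) : ℂ)
        (by exact_mod_cast ne_of_gt (stmt8pos_pos u _)) with hz
    set r : Fin (a - e) → ℝˣ := fun i =>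
      (if c i = 0 then 1 else -1) * stmt8pos u ⟨e + i, by omega⟩ with hr
    refine ⟨(z, r), ?_⟩
    show sgn (z, r) * mag (z, r) = u
    have hsbr : ∀ i, stmt8sb (r i) = c i := by
      intro i
      simp only [hr]
      rw [stmt8sb_mul, stmt8sb_pos (stmt8pos_pos u _), add_zero]
      rcases stmt8_zmod2_cases (c i) with h | h
      · rw [h, if_pos rfl]
        exact stmt8sb_pos (by norm_num)
      · rw [h, if_neg stmt8_one_ne_zero]
        refine stmt8sb_neg ?_
        norm_num
    have hsum : (∑ i, stmt8sb (r i) • ((b i : Fin a → ZMod 2))) = stmt8nu u := by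
      have := congrArg Subtype.val (b.sum_repr ⟨stmt8nu u, hWu⟩)
      simp only [hsbr]
      simpa only [Submodule.coe_sum, Submodule.coe_smul] using this
    have hsgn' : sgn (z, r) = stmt8iota (stmt8nu u) := by rw [hsgn]; simp only [hsum]
    have hmag' : mag (z, r) = stmt8pos u := by
      funext j
      simp only [hmag]
      by_cases h : (j : ℕ) < e
      · rw [dif_pos h]
        ext
        rw [stmt8cabs_val]
        simp only [hz]
        rw [Units.val_mk0, Complex.norm_real, Real.norm_eq_abs,
          abs_of_pos (stmt8pos_pos u _)]
      · rw [dif_neg h]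
        ext
        rw [stmt8rabs_val]
        simp only [hr]
        have hj : (⟨e + ((j:ℕ) - e), by omega⟩ : Fin a) = j := by
          apply Fin.ext
          simp only
          omega
        rw [hj]
        rcases stmt8_zmod2_cases (c ⟨(j:ℕ) - e, by omega⟩) with hci | hci
        · rw [hci, if_pos rfl, one_mul]
          exact abs_of_pos (stmt8pos_pos u j)
        · rw [hci, if_neg stmt8_one_ne_zero]
          rw [Units.val_mul]
          rw [show ((-1 : ℝˣ) : ℝ) = -1 from rfl]
          rw [neg_one_mul, abs_neg]
          exact abs_of_pos (stmt8pos_pos u j)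
    rw [hsgn', hmag']
    exact (stmt8_decomp u).symm
end
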